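/- For p ≥ 1, α ∈ [0,1), and p-integrable random variables X, Y, the functional EVaR_α^p(X) := inf_{t ∈ ℝ} { t + (1/(1-α))^{1/p} · ‖(X-t)⁺‖_p } is subadditive: EVaR_α^p(X+Y) ≤ EVaR_α^p(X) + EVaR_α^p(Y). -/

import Mathlib

open MeasureTheory ENNReal
open scoped ENNReal

/-- The Rényi entropic value-at-risk of order `p` at level `α`, in its
Rockafellar–Uryasev primal form. -/
noncomputable def EVaR {Ω : Type*} [MeasurableSpace Ω] (μ : Measure Ω)
    (p α : ℝ) (X : Ω → ℝ) : ℝ :=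
  ⨅ t : ℝ, (t + (1 / (1 - α)) ^ (1 / p) * (∫ ω, (max (X ω - t) 0) ^ p ∂μ) ^ (1 / p))

section aux

variable {Ω : Type*} [MeasurableSpace Ω] {μ : Measure Ω} [IsProbabilityMeasure μ]
variable {p : ℝ}

lemma pos_part_memLp (hp : 1 ≤ p) {Z : Ω → ℝ} (hZ : MemLp Z (ENNReal.ofReal p) μ) (t : ℝ) :
    MemLp (fun ω => max (Z ω - t) 0) (ENNReal.ofReal p) μ := by
  have := (hZ.sub (memLp_const t)).pos_part
  simpa [Pi.sub_apply] using this

lemma I_eq (hp : 1 ≤ p) {Z : Ω → ℝ} (hZ : MemLp Z (ENNReal.ofReal p) μ) (t : ℝ) :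
    (∫ ω, (max (Z ω - t) 0) ^ p ∂μ) ^ (1 / p)
      = (eLpNorm (fun ω => max (Z ω - t) 0) (ENNReal.ofReal p) μ).toReal := by
  have hp0 : 0 < p := lt_of_lt_of_le one_pos hp
  have hq0 : ENNReal.ofReal p ≠ 0 := by
    simpa [ENNReal.ofReal_eq_zero, not_le] using hp0
  have hqt : ENNReal.ofReal p ≠ ⊤ := ENNReal.ofReal_ne_top
  have hnn : (0:ℝ) ≤ (∫ a, ‖max (Z a - t) 0‖ ^ (ENNReal.ofReal p).toReal ∂μ)
      ^ (ENNReal.ofReal p).toReal⁻¹ :=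
    Real.rpow_nonneg (integral_nonneg fun a => by positivity) _
  rw [(pos_part_memLp hp hZ t).eLpNorm_eq_integral_rpow_norm hq0 hqt,
    ENNReal.toReal_ofReal hnn, ENNReal.toReal_ofReal hp0.le, one_div]
  congr 1
  exact integral_congr_ae (Filter.Eventually.of_forall fun ω => by
    simp [Real.norm_of_nonneg (le_max_right _ _)])

lemma I_nonneg {Z : Ω → ℝ} (t : ℝ) :
    0 ≤ (∫ ω, (max (Z ω - t) 0) ^ p ∂μ) ^ (1 / p) := by positivity

lemma lower_bound (hp : 1 ≤ p) {c : ℝ} (hc : 1 ≤ c) {Z : Ω → ℝ}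
    (hZ : MemLp Z (ENNReal.ofReal p) μ) (t : ℝ) :
    ∫ ω, Z ω ∂μ ≤ t + c * (∫ ω, (max (Z ω - t) 0) ^ p ∂μ) ^ (1 / p) := by
  have hp0 : 0 < p := lt_of_lt_of_le one_pos hp
  set g : Ω → ℝ := fun ω => max (Z ω - t) 0 with hg
  have hgmem : MemLp g (ENNReal.ofReal p) μ := pos_part_memLp hp hZ t
  have h1q : (1 : ℝ≥0∞) ≤ ENNReal.ofReal p := by
    simpa using ENNReal.ofReal_le_ofReal hp
  have hgint : Integrable g μ := hgmem.integrable h1q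
  have hZint : Integrable Z μ := hZ.integrable h1q
  -- L¹ norm of g is ∫ g
  have hL1 : ∫ ω, g ω ∂μ = (eLpNorm g 1 μ).toReal := by
    rw [(hgmem.mono_exponent h1q).eLpNorm_eq_integral_rpow_norm one_ne_zero
      ENNReal.one_ne_top]
    simp only [ENNReal.toReal_one, Real.rpow_one, inv_one]
    rw [ENNReal.toReal_ofReal (integral_nonneg fun ω => norm_nonneg _)]
    refine integral_congr_ae (Filter.Eventually.of_forall fun ω => ?_)
    simp [hg, Real.norm_of_nonneg (le_max_right _ _)]
  have hle : (eLpNorm g 1 μ).toReal ≤ (eLpNorm g (ENNReal.ofReal p) μ).toReal := by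
    refine ENNReal.toReal_mono hgmem.2.ne ?_
    exact eLpNorm_le_eLpNorm_of_exponent_le h1q hgmem.aestronglyMeasurable
  have hIg : ∫ ω, g ω ∂μ ≤ (∫ ω, (max (Z ω - t) 0) ^ p ∂μ) ^ (1 / p) := by
    rw [I_eq hp hZ t]; exact hL1.trans_le hle
  have hZg : ∫ ω, Z ω ∂μ ≤ t + ∫ ω, g ω ∂μ := by
    have : ∫ ω, Z ω ∂μ ≤ ∫ ω, (t + g ω) ∂μ := by
      refine integral_mono hZint (by exact (integrable_const t).add hgint) fun ω => ?_
      have : Z ω - t ≤ g ω := le_max_left _ _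
      linarith
    simpa [integral_add (integrable_const t) hgint] using this
  have hcI : ∫ ω, g ω ∂μ ≤ c * (∫ ω, (max (Z ω - t) 0) ^ p ∂μ) ^ (1 / p) := by
    calc ∫ ω, g ω ∂μ ≤ (∫ ω, (max (Z ω - t) 0) ^ p ∂μ) ^ (1 / p) := hIg
    _ ≤ c * (∫ ω, (max (Z ω - t) 0) ^ p ∂μ) ^ (1 / p) :=
        le_mul_of_one_le_left (I_nonneg t) hc
  linarith

lemma subadd (hp : 1 ≤ p) {X Y : Ω → ℝ}
    (hX : MemLp X (ENNReal.ofReal p) μ) (hY : MemLp Y (ENNReal.ofReal p) μ) (s t : ℝ) :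
    (∫ ω, (max (X ω + Y ω - (s + t)) 0) ^ p ∂μ) ^ (1 / p)
      ≤ (∫ ω, (max (X ω - s) 0) ^ p ∂μ) ^ (1 / p)
        + (∫ ω, (max (Y ω - t) 0) ^ p ∂μ) ^ (1 / p) := by
  have hXY : MemLp (fun ω => X ω + Y ω) (ENNReal.ofReal p) μ := hX.add hY
  have h1q : (1 : ℝ≥0∞) ≤ ENNReal.ofReal p := by
    simpa using ENNReal.ofReal_le_ofReal hp
  have hXm := pos_part_memLp hp hX s
  have hYm := pos_part_memLp hp hY t
  rw [I_eq hp hXY (s + t), I_eq hp hX s, I_eq hp hY t]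
  have hmono : eLpNorm (fun ω => max (X ω + Y ω - (s + t)) 0) (ENNReal.ofReal p) μ
      ≤ eLpNorm (fun ω => max (X ω - s) 0 + max (Y ω - t) 0) (ENNReal.ofReal p) μ := by
    refine eLpNorm_mono_real fun ω => ?_
    rw [Real.norm_of_nonneg (le_max_right _ _)]
    have h1 : X ω + Y ω - (s + t) ≤ max (X ω - s) 0 + max (Y ω - t) 0 := by
      have := le_max_left (X ω - s) 0
      have := le_max_left (Y ω - t) 0
      linarith
    have h2 : (0:ℝ) ≤ max (X ω - s) 0 + max (Y ω - t) 0 :=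
      add_nonneg (le_max_right _ _) (le_max_right _ _)
    exact max_le h1 h2
  have htri : eLpNorm (fun ω => max (X ω - s) 0 + max (Y ω - t) 0) (ENNReal.ofReal p) μ
      ≤ eLpNorm (fun ω => max (X ω - s) 0) (ENNReal.ofReal p) μ
        + eLpNorm (fun ω => max (Y ω - t) 0) (ENNReal.ofReal p) μ :=
    eLpNorm_add_le hXm.aestronglyMeasurable hYm.aestronglyMeasurable h1q
  have hfin : eLpNorm (fun ω => max (X ω - s) 0) (ENNReal.ofReal p) μ
      + eLpNorm (fun ω => max (Y ω - t) 0) (ENNReal.ofReal p) μ ≠ ⊤ :=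
    ENNReal.add_ne_top.mpr ⟨hXm.2.ne, hYm.2.ne⟩
  calc (eLpNorm (fun ω => max (X ω + Y ω - (s + t)) 0) (ENNReal.ofReal p) μ).toReal
      ≤ (eLpNorm (fun ω => max (X ω - s) 0) (ENNReal.ofReal p) μ
        + eLpNorm (fun ω => max (Y ω - t) 0) (ENNReal.ofReal p) μ).toReal :=
        ENNReal.toReal_mono hfin (hmono.trans htri)
    _ = _ := ENNReal.toReal_add hXm.2.ne hYm.2.ne

end aux

theorem stmt_5 {Ω : Type*} [MeasurableSpace Ω] (μ : Measure Ω) [IsProbabilityMeasure μ]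
    (p : ℝ) (hp : 1 ≤ p) (α : ℝ) (hα : α ∈ Set.Ico (0:ℝ) 1)
    (X Y : Ω → ℝ) (hX : MemLp X (ENNReal.ofReal p) μ) (hY : MemLp Y (ENNReal.ofReal p) μ) :
    EVaR μ p α (fun ω => X ω + Y ω) ≤ EVaR μ p α X + EVaR μ p α Y := by
  obtain ⟨hα0, hα1⟩ := hα
  have hp0 : 0 < p := lt_of_lt_of_le one_pos hp
  set c : ℝ := (1 / (1 - α)) ^ (1 / p) with hc_def
  have hc1 : 1 ≤ c := by
    apply Real.one_le_rpow
    · rw [le_div_iff₀ (by linarith)]; linarith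
    · positivity
  have hc0 : 0 ≤ c := le_trans zero_le_one hc1
  have hXY : MemLp (fun ω => X ω + Y ω) (ENNReal.ofReal p) μ := hX.add hY
  have bddZ : ∀ (Z : Ω → ℝ), MemLp Z (ENNReal.ofReal p) μ →
      BddBelow (Set.range fun t : ℝ =>
        t + c * (∫ ω, (max (Z ω - t) 0) ^ p ∂μ) ^ (1 / p)) := by
    intro Z hZ
    refine ⟨∫ ω, Z ω ∂μ, ?_⟩
    rintro x ⟨t, rfl⟩
    exact lower_bound hp hc1 hZ t
  have key : ∀ s t : ℝ,
      EVaR μ p α (fun ω => X ω + Y ω)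
        ≤ (s + c * (∫ ω, (max (X ω - s) 0) ^ p ∂μ) ^ (1 / p))
          + (t + c * (∫ ω, (max (Y ω - t) 0) ^ p ∂μ) ^ (1 / p)) := by
    intro s t
    have h1 : EVaR μ p α (fun ω => X ω + Y ω)
        ≤ (s + t) + c * (∫ ω, (max (X ω + Y ω - (s + t)) 0) ^ p ∂μ) ^ (1 / p) :=
      ciInf_le (bddZ _ hXY) (s + t)
    have h2 := subadd hp hX hY s t
    have h3 : c * (∫ ω, (max (X ω + Y ω - (s + t)) 0) ^ p ∂μ) ^ (1 / p)
        ≤ c * ((∫ ω, (max (X ω - s) 0) ^ p ∂μ) ^ (1 / p)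
          + (∫ ω, (max (Y ω - t) 0) ^ p ∂μ) ^ (1 / p)) :=
      mul_le_mul_of_nonneg_left h2 hc0
    calc EVaR μ p α (fun ω => X ω + Y ω)
        ≤ (s + t) + c * (∫ ω, (max (X ω + Y ω - (s + t)) 0) ^ p ∂μ) ^ (1 / p) := h1
      _ ≤ _ := by rw [mul_add] at h3; linarith
  exact le_ciInf_add_ciInf fun s t => key s t
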